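/- Theorem 1 (performance gap bound): Let ω, s, g, s̃ be finite random variables with joint p(ω,s,g,s̃) = p(ω)p(s|ω)p(g|s)p(s̃|g), where the relabeling kernel p(g|s) is induced by a bijection f (g = f(s) deterministically) and p(s|ω) is deterministic. Let p'(g) be a prior goal distribution and define η = E_{p'(g)p(s̃|g)}[log p'(g|s̃) - log p'(g)] and η̂ = E_{p(ω,s,g,s̃)}[log p(ω|s̃) - log p(ω)]. Then η̂ - η ≤ 2·R_max·sqrt(ε/2), where R_max = max over pairs (g,s̃) in the support of p'(g)p(s̃|g) of (log p'(g|s̃) - log p'(g)), and ε = E_{p(ω)}[KL(p(s|ω) ‖ p'(s))] with p'(s) the pushforward of p'(g) under f⁻¹. -/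

import Mathlib

open scoped BigOperators

/-- Kullback–Leibler divergence of finite distributions (natural logarithm). -/
noncomputable def kl {A : Type*} [Fintype A] (P Q : A → ℝ) : ℝ :=
  ∑ a, P a * Real.log (P a / Q a)

/-- Pointwise lower bound `x - y ≤ x log(x/y)`. -/
lemma gpim_log_ge {x y : ℝ} (hx : 0 ≤ x) (hy : 0 ≤ y) (hxy : 0 < x → 0 < y) :
    x - y ≤ x * Real.log (x / y) := by
  rcases hx.eq_or_lt with h | h
  · simp [← h, hy]
  · have hy' := hxy h
    have h1 : Real.log (y / x) ≤ y / x - 1 := Real.log_le_sub_one_of_pos (div_pos hy' h)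
    have h2 : Real.log (x / y) = - Real.log (y / x) := by
      rw [Real.log_div hy'.ne' h.ne', Real.log_div h.ne' hy'.ne']; ring
    have h3 : x * (y / x - 1) = y - x := by field_simp
    nlinarith [mul_le_mul_of_nonneg_left h1 h.le]

/-- Pointwise bound `(√x - √y)² ≤ x log(x/y) - x + y`. -/
lemma gpim_sqrt_le {x y : ℝ} (hx : 0 ≤ x) (hy : 0 ≤ y) (hxy : 0 < x → 0 < y) :
    (Real.sqrt x - Real.sqrt y) ^ 2 ≤ x * Real.log (x / y) - x + y := by
  rcases hx.eq_or_lt with h | h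
  · rw [← h]
    simp [Real.sq_sqrt hy]
  · have hy' := hxy h
    set a := Real.sqrt x with ha
    set b := Real.sqrt y with hb
    have ha2 : a ^ 2 = x := Real.sq_sqrt hx
    have hb2 : b ^ 2 = y := Real.sq_sqrt hy
    have hap : 0 < a := Real.sqrt_pos.2 h
    have hbp : 0 < b := Real.sqrt_pos.2 hy'
    have hxy' : x / y = (a / b) ^ 2 := by rw [div_pow, ha2, hb2]
    have hlog : Real.log (x / y) = 2 * Real.log (a / b) := by
      rw [hxy', Real.log_pow]; push_cast; ring
    have h1 : Real.log (b / a) ≤ b / a - 1 := Real.log_le_sub_one_of_pos (div_pos hbp hap)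
    have h2 : Real.log (a / b) = - Real.log (b / a) := by
      rw [Real.log_div hap.ne' hbp.ne', Real.log_div hbp.ne' hap.ne']; ring
    have key : 1 - b / a ≤ Real.log (a / b) := by rw [h2]; linarith
    have hmul : a ^ 2 * (2 * (1 - b / a)) = 2 * a ^ 2 - 2 * (a * b) := by field_simp
    have h3 : 2 * a ^ 2 - 2 * (a * b) ≤ x * Real.log (x / y) := by
      rw [hlog, ← ha2]
      nlinarith [mul_le_mul_of_nonneg_left key (by positivity : (0:ℝ) ≤ 2 * a ^ 2)]
    nlinarith

set_option maxHeartbeats 1000000 in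
/-- Theorem 1 (GPIM performance-gap bound).  The joint is
`p(ω,s,g,s̃) = p(ω)·[s = sOf ω]·[g = f s]·k(s̃|g)`: `p(s|ω)` is deterministic
(given by `sOf`) and the relabeling is the bijection `f`.  `p'` is a prior
goal distribution with rollout `p'(g)·k(s̃|g)`.  With
`η = E_{p'(g)k(s̃|g)}[log p'(g|s̃) - log p'(g)]`,
`η̂ = E_{p(ω,s,g,s̃)}[log p(ω|s̃) - log p(ω)]`,
`Rmax` the maximum of `log p'(g|s̃) - log p'(g)` over the support of the
prior rollout, and `ε = E_{p(ω)}[KL(p(s|ω) ‖ p'(s))]` with `p'(s)` the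
pushforward of `p'` under `f⁻¹`, we have `η̂ - η ≤ 2·Rmax·√(ε/2)`. -/
theorem stmt7 {Ω S G S' : Type*} [Fintype Ω] [Fintype S] [DecidableEq S] [Fintype G] [Fintype S']
    (pΩ : Ω → ℝ) (sOf : Ω → S) (f : S ≃ G) (k : G → S' → ℝ) (p' : G → ℝ)
    (hΩ0 : ∀ ω, 0 < pΩ ω) (hΩ1 : ∑ ω, pΩ ω = 1)
    (hk0 : ∀ g s', 0 ≤ k g s') (hk1 : ∀ g, ∑ s', k g s' = 1)
    (hp'0 : ∀ g, 0 < p' g) (hp'1 : ∑ g, p' g = 1)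
    (η η' ε Rmax : ℝ)
    (hη : η = ∑ g, ∑ s', p' g * k g s' *
      (Real.log (p' g * k g s' / ∑ g', p' g' * k g' s') - Real.log (p' g)))
    (hη' : η' = ∑ ω, ∑ s', pΩ ω * k (f (sOf ω)) s' *
      (Real.log (pΩ ω * k (f (sOf ω)) s' / ∑ ω', pΩ ω' * k (f (sOf ω')) s') -
        Real.log (pΩ ω)))
    (hε : ε = ∑ ω, pΩ ω *
      kl (fun s => if s = sOf ω then (1 : ℝ) else 0) (fun s => p' (f s)))
    (hRub : ∀ g s', 0 < p' g * k g s' →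
      Real.log (p' g * k g s' / ∑ g', p' g' * k g' s') - Real.log (p' g) ≤ Rmax)
    (hRat : ∃ g s', 0 < p' g * k g s' ∧
      Real.log (p' g * k g s' / ∑ g', p' g' * k g' s') - Real.log (p' g) = Rmax) :
    η' - η ≤ 2 * Rmax * Real.sqrt (ε / 2) := by
  classical
  -- marginal `m'` of the prior rollout, and marginal `m` of the agent rollout
  have hm'nonneg : ∀ s', (0:ℝ) ≤ ∑ g', p' g' * k g' s' :=
    fun s' => Finset.sum_nonneg fun g _ => mul_nonneg (hp'0 g).le (hk0 g s')
  have hm'pos : ∀ g s', 0 < k g s' → 0 < ∑ g', p' g' * k g' s' := by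
    intro g s' hk
    have h1 : p' g * k g s' ≤ ∑ g', p' g' * k g' s' :=
      Finset.single_le_sum (fun g' _ => mul_nonneg (hp'0 g').le (hk0 g' s')) (Finset.mem_univ g)
    exact lt_of_lt_of_le (mul_pos (hp'0 g) hk) h1
  have hm'sum : ∑ s', ∑ g', p' g' * k g' s' = 1 := by
    rw [Finset.sum_comm]
    calc ∑ g, ∑ s', p' g * k g s' = ∑ g, p' g * ∑ s', k g s' := by
          simp [Finset.mul_sum]
      _ = 1 := by simp [hk1, hp'1]
  have hmnonneg : ∀ s', (0:ℝ) ≤ ∑ ω', pΩ ω' * k (f (sOf ω')) s' :=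
    fun s' => Finset.sum_nonneg fun ω _ => mul_nonneg (hΩ0 ω).le (hk0 _ s')
  have hmsum : ∑ s', ∑ ω', pΩ ω' * k (f (sOf ω')) s' = 1 := by
    rw [Finset.sum_comm]
    calc ∑ ω, ∑ s', pΩ ω * k (f (sOf ω)) s' = ∑ ω, pΩ ω * ∑ s', k (f (sOf ω)) s' := by
          simp [Finset.mul_sum]
      _ = 1 := by simp [hk1, hΩ1]
  have hmpos : ∀ ω s', 0 < k (f (sOf ω)) s' → 0 < ∑ ω', pΩ ω' * k (f (sOf ω')) s' := by
    intro ω s' hk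
    have h1 : pΩ ω * k (f (sOf ω)) s' ≤ ∑ ω', pΩ ω' * k (f (sOf ω')) s' :=
      Finset.single_le_sum (f := fun ω' => pΩ ω' * k (f (sOf ω')) s')
        (fun ω' _ => mul_nonneg (hΩ0 ω').le (hk0 (f (sOf ω')) s')) (Finset.mem_univ ω)
    exact lt_of_lt_of_le (mul_pos (hΩ0 ω) hk) h1
  have hmlem' : ∀ s', 0 < (∑ ω', pΩ ω' * k (f (sOf ω')) s') → 0 < ∑ g', p' g' * k g' s' := by
    intro s' hm
    by_contra hc
    push_neg at hc
    have h0 : ∑ g', p' g' * k g' s' = 0 := le_antisymm hc (hm'nonneg s')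
    have hall : ∀ g, k g s' = 0 := by
      intro g
      have h2 := (Finset.sum_eq_zero_iff_of_nonneg
        (fun g' _ => mul_nonneg (hp'0 g').le (hk0 g' s'))).1 h0 g (Finset.mem_univ g)
      rcases mul_eq_zero.1 h2 with h | h
      · exact absurd h (hp'0 g).ne'
      · exact h
    have hz : (∑ ω', pΩ ω' * k (f (sOf ω')) s') = 0 := by simp [hall]
    exact absurd hz hm.ne'
  -- the per-goal reward `r`
  set r : G → ℝ := fun g => ∑ s', k g s' * Real.log (k g s' / ∑ g', p' g' * k g' s')
    with hrdef
  have hlogsimp : ∀ g s', 0 < k g s' →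
      Real.log (p' g * k g s' / ∑ g', p' g' * k g' s') - Real.log (p' g)
        = Real.log (k g s' / ∑ g', p' g' * k g' s') := by
    intro g s' hk
    rw [Real.log_div (mul_pos (hp'0 g) hk).ne' (hm'pos g s' hk).ne',
      Real.log_mul (hp'0 g).ne' hk.ne', Real.log_div hk.ne' (hm'pos g s' hk).ne']
    ring
  have hηr : η = ∑ g, p' g * r g := by
    rw [hη]
    refine Finset.sum_congr rfl fun g _ => ?_
    simp only [hrdef]
    rw [Finset.mul_sum]
    refine Finset.sum_congr rfl fun s' _ => ?_
    rcases (hk0 g s').eq_or_lt with hk | hk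
    · simp [← hk]
    · rw [hlogsimp g s' hk]; ring
  have hrnonneg : ∀ g, 0 ≤ r g := by
    intro g
    have key : ∀ s' ∈ Finset.univ, k g s' - (∑ g', p' g' * k g' s')
        ≤ k g s' * Real.log (k g s' / ∑ g', p' g' * k g' s') :=
      fun s' _ => gpim_log_ge (hk0 g s') (hm'nonneg s') (hm'pos g s')
    simp only [hrdef]
    calc (0:ℝ) = ∑ s', k g s' - ∑ s', ∑ g', p' g' * k g' s' := by rw [hk1 g, hm'sum]; ring
      _ = ∑ s', (k g s' - ∑ g', p' g' * k g' s') := (Finset.sum_sub_distrib _ _).symm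
      _ ≤ _ := Finset.sum_le_sum key
  have hrle : ∀ g, r g ≤ Rmax := by
    intro g
    simp only [hrdef]
    calc ∑ s', k g s' * Real.log (k g s' / ∑ g', p' g' * k g' s')
        ≤ ∑ s', k g s' * Rmax := by
          refine Finset.sum_le_sum fun s' _ => ?_
          rcases (hk0 g s').eq_or_lt with hk | hk
          · simp [← hk]
          · have h := hRub g s' (mul_pos (hp'0 g) hk)
            rw [hlogsimp g s' hk] at h
            exact mul_le_mul_of_nonneg_left h (hk0 g s')
      _ = Rmax := by rw [← Finset.sum_mul, hk1 g, one_mul]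
  have hηnonneg : 0 ≤ η := by
    rw [hηr]
    exact Finset.sum_nonneg fun g _ => mul_nonneg (hp'0 g).le (hrnonneg g)
  have hηle : η ≤ Rmax := by
    rw [hηr]
    calc ∑ g, p' g * r g ≤ ∑ g, p' g * Rmax :=
          Finset.sum_le_sum fun g _ => mul_le_mul_of_nonneg_left (hrle g) (hp'0 g).le
      _ = Rmax := by rw [← Finset.sum_mul, hp'1, one_mul]
  have hRmax : 0 ≤ Rmax := hηnonneg.trans hηle
  -- pushforward of pΩ onto goals
  set pG : G → ℝ := fun g => ∑ ω, if f (sOf ω) = g then pΩ ω else 0 with hpGdef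
  have hregroup : ∀ F : G → ℝ, ∑ ω, pΩ ω * F (f (sOf ω)) = ∑ g, pG g * F g := by
    intro F
    simp only [hpGdef]
    have h1 : ∀ g, (∑ ω, if f (sOf ω) = g then pΩ ω else 0) * F g
        = ∑ ω, if f (sOf ω) = g then pΩ ω * F g else 0 := by
      intro g
      rw [Finset.sum_mul]
      exact Finset.sum_congr rfl fun ω _ => by split <;> simp
    rw [Finset.sum_congr rfl fun g _ => h1 g, Finset.sum_comm]
    exact Finset.sum_congr rfl fun ω _ => by simp
  have hpGnonneg : ∀ g, 0 ≤ pG g := by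
    intro g
    simp only [hpGdef]
    exact Finset.sum_nonneg fun ω _ => by
      by_cases h : f (sOf ω) = g <;> simp [h, (hΩ0 ω).le]
  have hpGsum : ∑ g, pG g = 1 := by
    have h := hregroup fun _ => (1:ℝ)
    simp only [mul_one] at h
    rw [← h, hΩ1]
  have hpGle1 : ∀ g, pG g ≤ 1 := by
    intro g
    have h : pG g ≤ ∑ g', pG g' :=
      Finset.single_le_sum (fun g' _ => hpGnonneg g') (Finset.mem_univ g)
    rwa [hpGsum] at h
  -- rewrite η'
  have hη'eq : η' = ∑ ω, ∑ s', pΩ ω * k (f (sOf ω)) s' *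
      Real.log (k (f (sOf ω)) s' / ∑ ω', pΩ ω' * k (f (sOf ω')) s') := by
    rw [hη']
    refine Finset.sum_congr rfl fun ω _ => Finset.sum_congr rfl fun s' _ => ?_
    rcases (hk0 (f (sOf ω)) s').eq_or_lt with hk | hk
    · simp [← hk]
    · have hm := hmpos ω s' hk
      rw [Real.log_div (mul_pos (hΩ0 ω) hk).ne' hm.ne', Real.log_mul (hΩ0 ω).ne' hk.ne',
        Real.log_div hk.ne' hm.ne']
      ring
  have hJ : ∑ ω, ∑ s', pΩ ω * k (f (sOf ω)) s' *
      Real.log (k (f (sOf ω)) s' / ∑ g', p' g' * k g' s') = ∑ g, pG g * r g := by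
    rw [← hregroup r]
    refine Finset.sum_congr rfl fun ω _ => ?_
    simp only [hrdef]
    rw [Finset.mul_sum]
    exact Finset.sum_congr rfl fun s' _ => by ring
  have hη'leJ : η' ≤ ∑ g, pG g * r g := by
    rw [← hJ, hη'eq]
    have key : ∑ ω, ∑ s', (pΩ ω * k (f (sOf ω)) s' *
          Real.log (k (f (sOf ω)) s' / ∑ g', p' g' * k g' s')
        - pΩ ω * k (f (sOf ω)) s' *
          Real.log (k (f (sOf ω)) s' / ∑ ω', pΩ ω' * k (f (sOf ω')) s'))
        = ∑ s', (∑ ω', pΩ ω' * k (f (sOf ω')) s') *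
            (Real.log (∑ ω', pΩ ω' * k (f (sOf ω')) s')
              - Real.log (∑ g', p' g' * k g' s')) := by
      rw [Finset.sum_comm]
      refine Finset.sum_congr rfl fun s' _ => ?_
      rw [Finset.sum_mul]
      refine Finset.sum_congr rfl fun ω _ => ?_
      rcases (hk0 (f (sOf ω)) s').eq_or_lt with hk | hk
      · simp [← hk]
      · have hm := hmpos ω s' hk
        have hm' := hm'pos (f (sOf ω)) s' hk
        rw [Real.log_div hk.ne' hm'.ne', Real.log_div hk.ne' hm.ne']
        ring
    have key2 : 0 ≤ ∑ s', (∑ ω', pΩ ω' * k (f (sOf ω')) s') *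
        (Real.log (∑ ω', pΩ ω' * k (f (sOf ω')) s')
          - Real.log (∑ g', p' g' * k g' s')) := by
      have pt : ∀ s' ∈ Finset.univ, (∑ ω', pΩ ω' * k (f (sOf ω')) s')
          - (∑ g', p' g' * k g' s')
          ≤ (∑ ω', pΩ ω' * k (f (sOf ω')) s') *
            (Real.log (∑ ω', pΩ ω' * k (f (sOf ω')) s')
              - Real.log (∑ g', p' g' * k g' s')) := by
        intro s' _
        rcases (hmnonneg s').eq_or_lt with hm | hm
        · rw [← hm]
          simpa using hm'nonneg s'
        · have hm' := hmlem' s' hm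
          have h := gpim_log_ge (hmnonneg s') (hm'nonneg s') (fun _ => hm')
          rwa [Real.log_div hm.ne' hm'.ne'] at h
      calc (0:ℝ) = ∑ s', (∑ ω', pΩ ω' * k (f (sOf ω')) s')
            - ∑ s', ∑ g', p' g' * k g' s' := by rw [hmsum, hm'sum]; ring
        _ = ∑ s', ((∑ ω', pΩ ω' * k (f (sOf ω')) s') - ∑ g', p' g' * k g' s') :=
            (Finset.sum_sub_distrib _ _).symm
        _ ≤ _ := Finset.sum_le_sum pt
    have hsub : ∑ ω, ∑ s', (pΩ ω * k (f (sOf ω)) s' *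
          Real.log (k (f (sOf ω)) s' / ∑ g', p' g' * k g' s')
        - pΩ ω * k (f (sOf ω)) s' *
          Real.log (k (f (sOf ω)) s' / ∑ ω', pΩ ω' * k (f (sOf ω')) s'))
        = (∑ ω, ∑ s', pΩ ω * k (f (sOf ω)) s' *
            Real.log (k (f (sOf ω)) s' / ∑ g', p' g' * k g' s'))
          - ∑ ω, ∑ s', pΩ ω * k (f (sOf ω)) s' *
            Real.log (k (f (sOf ω)) s' / ∑ ω', pΩ ω' * k (f (sOf ω')) s') := by
      rw [← Finset.sum_sub_distrib]
      exact Finset.sum_congr rfl fun ω _ => Finset.sum_sub_distrib _ _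
    linarith [hsub, key, key2]
  -- ε as cross-entropy of pG against p'
  have hεeq : ε = ∑ g, pG g * (-Real.log (p' g)) := by
    have hklδ : ∀ ω, kl (fun s => if s = sOf ω then (1:ℝ) else 0) (fun s => p' (f s))
        = -Real.log (p' (f (sOf ω))) := by
      intro ω
      unfold kl
      rw [Finset.sum_eq_single (sOf ω)]
      · simp [Real.log_inv]
      · intro b _ hb; simp [hb]
      · intro h; exact absurd (Finset.mem_univ _) h
    rw [hε]
    calc ∑ ω, pΩ ω * kl (fun s => if s = sOf ω then (1:ℝ) else 0) (fun s => p' (f s))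
        = ∑ ω, pΩ ω * (-Real.log (p' (f (sOf ω)))) :=
          Finset.sum_congr rfl fun ω _ => by rw [hklδ ω]
      _ = ∑ g, pG g * (-Real.log (p' g)) := hregroup (fun g => -Real.log (p' g))
  -- KL divergence of pG from p'
  set D : ℝ := ∑ g, pG g * Real.log (pG g / p' g) with hDdef
  have hDnonneg : 0 ≤ D := by
    have pt : ∀ g ∈ Finset.univ, pG g - p' g ≤ pG g * Real.log (pG g / p' g) :=
      fun g _ => gpim_log_ge (hpGnonneg g) (hp'0 g).le (fun _ => hp'0 g)
    calc (0:ℝ) = ∑ g, pG g - ∑ g, p' g := by rw [hpGsum, hp'1]; ring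
      _ = ∑ g, (pG g - p' g) := (Finset.sum_sub_distrib _ _).symm
      _ ≤ D := by rw [hDdef]; exact Finset.sum_le_sum pt
  have hDle : D ≤ ε := by
    rw [hεeq, hDdef]
    refine Finset.sum_le_sum fun g _ => ?_
    rcases (hpGnonneg g).eq_or_lt with h | h
    · simp [← h]
    · rw [Real.log_div h.ne' (hp'0 g).ne']
      have hlogle : Real.log (pG g) ≤ 0 := Real.log_nonpos (hpGnonneg g) (hpGle1 g)
      nlinarith [mul_nonpos_iff.2 (Or.inr ⟨hlogle, h.le⟩)]
  have hεnonneg : 0 ≤ ε := hDnonneg.trans hDle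
  -- total variation and Pinsker-type bound
  set T : ℝ := ∑ g, |pG g - p' g| with hTdef
  set S1 : ℝ := ∑ g, (Real.sqrt (pG g) - Real.sqrt (p' g)) ^ 2 with hS1def
  have hS1leD : S1 ≤ D := by
    have pt : ∀ g ∈ Finset.univ, (Real.sqrt (pG g) - Real.sqrt (p' g)) ^ 2
        ≤ pG g * Real.log (pG g / p' g) - pG g + p' g :=
      fun g _ => gpim_sqrt_le (hpGnonneg g) (hp'0 g).le (fun _ => hp'0 g)
    calc S1 ≤ ∑ g, (pG g * Real.log (pG g / p' g) - pG g + p' g) := by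
          rw [hS1def]; exact Finset.sum_le_sum pt
      _ = D := by
          rw [Finset.sum_add_distrib, Finset.sum_sub_distrib, hpGsum, hp'1, hDdef]; ring
  have hS2 : ∑ g, (Real.sqrt (pG g) + Real.sqrt (p' g)) ^ 2 ≤ 4 := by
    have pt : ∀ g ∈ Finset.univ, (Real.sqrt (pG g) + Real.sqrt (p' g)) ^ 2
        ≤ 2 * pG g + 2 * p' g := by
      intro g _
      have h1 : Real.sqrt (pG g) ^ 2 = pG g := Real.sq_sqrt (hpGnonneg g)
      have h2 : Real.sqrt (p' g) ^ 2 = p' g := Real.sq_sqrt (hp'0 g).le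
      nlinarith [sq_nonneg (Real.sqrt (pG g) - Real.sqrt (p' g))]
    calc ∑ g, (Real.sqrt (pG g) + Real.sqrt (p' g)) ^ 2
        ≤ ∑ g, (2 * pG g + 2 * p' g) := Finset.sum_le_sum pt
      _ = 4 := by
          rw [Finset.sum_add_distrib, ← Finset.mul_sum, ← Finset.mul_sum, hpGsum, hp'1]
          norm_num
  have hT3 : T ^ 2 ≤ 4 * D := by
    have hcs := Finset.sum_mul_sq_le_sq_mul_sq Finset.univ
      (fun g => |Real.sqrt (pG g) - Real.sqrt (p' g)|)
      (fun g => Real.sqrt (pG g) + Real.sqrt (p' g))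
    have hTeq : T = ∑ g, |Real.sqrt (pG g) - Real.sqrt (p' g)|
        * (Real.sqrt (pG g) + Real.sqrt (p' g)) := by
      rw [hTdef]
      refine Finset.sum_congr rfl fun g _ => ?_
      have hb : 0 ≤ Real.sqrt (pG g) + Real.sqrt (p' g) := by positivity
      have hprod : (Real.sqrt (pG g) - Real.sqrt (p' g))
          * (Real.sqrt (pG g) + Real.sqrt (p' g)) = pG g - p' g := by
        have h1 : Real.sqrt (pG g) ^ 2 = pG g := Real.sq_sqrt (hpGnonneg g)
        have h2 : Real.sqrt (p' g) ^ 2 = p' g := Real.sq_sqrt (hp'0 g).le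
        calc (Real.sqrt (pG g) - Real.sqrt (p' g)) * (Real.sqrt (pG g) + Real.sqrt (p' g))
            = Real.sqrt (pG g) ^ 2 - Real.sqrt (p' g) ^ 2 := by ring
          _ = pG g - p' g := by rw [h1, h2]
      rw [← hprod, abs_mul, abs_of_nonneg hb]
    have hS1abs : ∑ g, (|Real.sqrt (pG g) - Real.sqrt (p' g)|) ^ 2 = S1 := by
      rw [hS1def]; exact Finset.sum_congr rfl fun g _ => sq_abs _
    have hS2nonneg : (0:ℝ) ≤ ∑ g, (Real.sqrt (pG g) + Real.sqrt (p' g)) ^ 2 :=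
      Finset.sum_nonneg fun g _ => sq_nonneg _
    calc T ^ 2 = (∑ g, |Real.sqrt (pG g) - Real.sqrt (p' g)|
          * (Real.sqrt (pG g) + Real.sqrt (p' g))) ^ 2 := by rw [hTeq]
      _ ≤ (∑ g, (|Real.sqrt (pG g) - Real.sqrt (p' g)|) ^ 2)
          * ∑ g, (Real.sqrt (pG g) + Real.sqrt (p' g)) ^ 2 := hcs
      _ = S1 * ∑ g, (Real.sqrt (pG g) + Real.sqrt (p' g)) ^ 2 := by rw [hS1abs]
      _ ≤ D * 4 := mul_le_mul hS1leD hS2 hS2nonneg hDnonneg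
      _ = 4 * D := by ring
  have hTnonneg : 0 ≤ T := by
    rw [hTdef]; exact Finset.sum_nonneg fun g _ => abs_nonneg _
  have hTle : T ≤ 2 * Real.sqrt D := by
    have h4 : T ≤ Real.sqrt (4 * D) := by
      rw [Real.le_sqrt hTnonneg (by positivity)]
      linarith
    rwa [show (4:ℝ) * D = 2 ^ 2 * D by norm_num, Real.sqrt_mul (by positivity) D,
      Real.sqrt_sq (by norm_num : (0:ℝ) ≤ 2)] at h4
  -- assemble
  have hfin1 : η' - η ≤ ∑ g, (pG g - p' g) * r g := by
    have h2 : ∑ g, (pG g - p' g) * r g = ∑ g, pG g * r g - ∑ g, p' g * r g := by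
      rw [← Finset.sum_sub_distrib]
      exact Finset.sum_congr rfl fun g _ => by ring
    rw [hηr]
    linarith [hη'leJ, h2]
  have hfin2 : ∑ g, (pG g - p' g) * r g ≤ Rmax * (T / 2) := by
    have pt : ∀ g ∈ Finset.univ, (pG g - p' g) * r g
        ≤ ((pG g - p' g) + |pG g - p' g|) / 2 * Rmax := by
      intro g _
      rcases le_or_gt (p' g) (pG g) with h | h
      · rw [abs_of_nonneg (by linarith : (0:ℝ) ≤ pG g - p' g)]
        have he : ((pG g - p' g) + (pG g - p' g)) / 2 * Rmax = (pG g - p' g) * Rmax := by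
          ring
        rw [he]
        exact mul_le_mul_of_nonneg_left (hrle g) (by linarith)
      · rw [abs_of_neg (by linarith : pG g - p' g < 0)]
        have he : ((pG g - p' g) + -(pG g - p' g)) / 2 * Rmax = 0 := by ring
        rw [he]
        exact mul_nonpos_iff.2 (Or.inr ⟨by linarith, hrnonneg g⟩)
    have hd0 : ∑ g, (pG g - p' g) = 0 := by
      rw [Finset.sum_sub_distrib, hpGsum, hp'1]; ring
    calc ∑ g, (pG g - p' g) * r g
        ≤ ∑ g, ((pG g - p' g) + |pG g - p' g|) / 2 * Rmax := Finset.sum_le_sum pt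
      _ = (∑ g, ((pG g - p' g) + |pG g - p' g|) / 2) * Rmax := by rw [Finset.sum_mul]
      _ = Rmax * (T / 2) := by
          have he : ∑ g, ((pG g - p' g) + |pG g - p' g|) / 2
              = (∑ g, (pG g - p' g) + ∑ g, |pG g - p' g|) / 2 := by
            rw [← Finset.sum_add_distrib, ← Finset.sum_div]
          rw [he, hd0, ← hTdef]
          ring
  have h5 : Rmax * (T / 2) ≤ Rmax * Real.sqrt D :=
    mul_le_mul_of_nonneg_left (by linarith) hRmax
  have h6 : Real.sqrt D ≤ Real.sqrt ε := Real.sqrt_le_sqrt hDle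
  have h7 : Real.sqrt ε ≤ 2 * Real.sqrt (ε / 2) := by
    have he : 2 * Real.sqrt (ε / 2) = Real.sqrt (4 * (ε / 2)) := by
      rw [show (4:ℝ) * (ε / 2) = 2 ^ 2 * (ε / 2) by norm_num,
        Real.sqrt_mul (by positivity) (ε / 2), Real.sqrt_sq (by norm_num : (0:ℝ) ≤ 2)]
    rw [he]
    exact Real.sqrt_le_sqrt (by linarith)
  have h8 : Rmax * Real.sqrt D ≤ Rmax * Real.sqrt ε :=
    mul_le_mul_of_nonneg_left h6 hRmax
  have h9 : Rmax * Real.sqrt ε ≤ Rmax * (2 * Real.sqrt (ε / 2)) :=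
    mul_le_mul_of_nonneg_left h7 hRmax
  calc η' - η ≤ ∑ g, (pG g - p' g) * r g := hfin1
    _ ≤ Rmax * (T / 2) := hfin2
    _ ≤ Rmax * Real.sqrt D := h5
    _ ≤ Rmax * Real.sqrt ε := h8
    _ ≤ Rmax * (2 * Real.sqrt (ε / 2)) := h9
    _ = 2 * Rmax * Real.sqrt (ε / 2) := by ring
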